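/- arXiv:1907.05605 — 4 statements merged into one kernel-verified Lean document; each statement's English description precedes it below -/
import Mathlib

section
/- Let S = {1, 2, …, n} with n ≥ 3, let P be an irreducible stochastic matrix on S, and let μ be a probability measure consistent with P. If the set 𝒞(μ) of possible coalescing pairs comprises exactly the single pair {1,2}, then Σ_{j=3}^n p_{1,j} = Σ_{j=3}^n p_{2,j} = Σ_{i=3}^n (p_{i,1} + p_{i,2}). -/
open MeasureTheory
open scoped ENNReal

namespace CFTP

variable {S : Type*}

/-- Forward composition `f_t ∘ f_{t-1} ∘ ⋯ ∘ f_1` (functions are indexed by 1,2,…). -/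
def fwd (f : ℕ → S → S) : ℕ → S → S
  | 0 => id
  | t + 1 => f (t + 1) ∘ fwd f t

/-- Backward composition `f_1 ∘ f_2 ∘ ⋯ ∘ f_t`. -/
def bwd (f : ℕ → S → S) : ℕ → S → S
  | 0 => id
  | t + 1 => bwd f t ∘ f (t + 1)

/-- `k_t(f⃗)`: the number of equivalence classes of `i ~ j ↔ f⃗_t i = f⃗_t j`,
i.e. the cardinality of the image of the forward composition. -/
noncomputable def ktF (f : ℕ → S → S) (t : ℕ) : ℕ := Set.ncard (Set.range (fwd f t))

/-- `k_t(f⃖)`: the cardinality of the image of the backward composition. -/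
noncomputable def ktB (f : ℕ → S → S) (t : ℕ) : ℕ := Set.ncard (Set.range (bwd f t))

/-- `k(f⃗)`: the eventual (= minimal) value of the non-increasing sequence `k_t(f⃗)`. -/
noncomputable def kF (f : ℕ → S → S) : ℕ := ⨅ t, ktF f t

/-- `k(f⃖)`. -/
noncomputable def kB (f : ℕ → S → S) : ℕ := ⨅ t, ktB f t

/-- `μbar` is the joint law of an i.i.d. sequence with one-step law `ν`,
i.e. the countable product measure `∏_{s ∈ ℕ} ν`, characterised by its
values on cylinder events. -/
def IsIID [MeasurableSpace S] (ν : Measure (S → S)) (μbar : Measure (ℕ → S → S)) : Prop :=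
  ∀ (I : Finset ℕ) (g : ℕ → S → S),
    μbar {F | ∀ s ∈ I, F s = g s} = ∏ s ∈ I, ν {g s}

/-- The support of a probability measure on the finite set `F_S`. -/
def supp [MeasurableSpace S] (ν : Measure (S → S)) : Set (S → S) := {f | 0 < ν {f}}

/-- A stochastic matrix: nonnegative entries, row sums one. -/
def IsStochastic [Fintype S] (P : S → S → ℝ) : Prop :=
  (∀ i j, 0 ≤ P i j) ∧ ∀ i, ∑ j, P i j = 1

/-- `ν ∈ L(P)`: the measure `ν` on `F_S` is consistent with the matrix `P`. -/
def Consistent [Fintype S] [MeasurableSpace S] (P : S → S → ℝ) (ν : Measure (S → S)) : Prop :=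
  ∀ i j, ν {f : S → S | f i = j} = ENNReal.ofReal (P i j)

/-- Irreducibility: for all `i j` some power of `P` has positive `(i,j)` entry. -/
def Irred [Fintype S] [DecidableEq S] (P : S → S → ℝ) : Prop :=
  ∀ i j, ∃ t, 1 ≤ t ∧ 0 < ((Matrix.of P) ^ t) i j

/-- Aperiodicity: for each `i`, the gcd of `{t ≥ 1 : (P^t)_{i,i} > 0}` is `1`,
expressed as: every common divisor of that set equals `1`. -/
def Aperiodic [Fintype S] [DecidableEq S] (P : S → S → ℝ) : Prop :=
  ∀ i, ∀ d : ℕ, (∀ t, 1 ≤ t → 0 < ((Matrix.of P) ^ t) i i → d ∣ t) → d = 1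

/-- A function is constant. -/
def IsConst (g : S → S) : Prop := ∀ i j, g i = g j

/-- The backward coalescence time `C`. -/
noncomputable def Ctime (F : ℕ → S → S) : ℕ∞ :=
  sInf ((fun t : ℕ => (t : ℕ∞)) '' {t : ℕ | 1 ≤ t ∧ IsConst (bwd F t)})

/-- The forward coalescence time `T`. -/
noncomputable def Ttime (F : ℕ → S → S) : ℕ∞ :=
  sInf ((fun t : ℕ => (t : ℕ∞)) '' {t : ℕ | 1 ≤ t ∧ IsConst (fwd F t)})

/-- The 0-1 matrix `M_f`. -/
noncomputable def Mmat [Fintype S] [DecidableEq S] (f : S → S) : Matrix S S ℝ :=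
  Matrix.of fun i j => if f i = j then 1 else 0

/-- The product `M_{f_t} M_{f_{t-1}} ⋯ M_{f_1}`. -/
noncomputable def Mprod [Fintype S] [DecidableEq S] (f : ℕ → S → S) : ℕ → Matrix S S ℝ
  | 0 => 1
  | t + 1 => Mmat (f (t + 1)) * Mprod f t

/-- The event that states `i` and `j` coalesce. -/
def coalEvent (i j : S) : Set (ℕ → S → S) := {F | ∃ t, 1 ≤ t ∧ fwd F t i = fwd F t j}

section aux
variable {n : ℕ} [MeasurableSpace (Fin n)] [DiscreteMeasurableSpace (Fin n)]
  {ν : Measure (Fin n → Fin n)} {μbar : Measure (ℕ → Fin n → Fin n)}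

lemma singleton_meas (f : Fin n → Fin n) : MeasurableSet {f} := by
  have : {f} = ⋂ i, (fun g : Fin n → Fin n => g i) ⁻¹' {f i} := by
    ext g; simp [funext_iff, Set.mem_iInter, eq_comm]
  rw [this]
  exact MeasurableSet.iInter fun i => (measurable_pi_apply i) MeasurableSet.of_discrete

open scoped Classical in
lemma meas_set (ν : Measure (Fin n → Fin n)) (A : Set (Fin n → Fin n)) :
    ν A = ∑ f ∈ Finset.univ.filter (· ∈ A), ν {f} := by
  rw [← measure_biUnion_finset ?_ (fun f _ => singleton_meas f)]
  · congr 1; ext g; simp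
  · intro a _ b _ hab
    simp [Function.onFun, Set.disjoint_singleton, hab]

lemma cyl1 (hiid : IsIID ν μbar) (s : ℕ) (f : Fin n → Fin n) :
    μbar {F | F s = f} = ν {f} := by
  simpa using hiid {s} fun _ => f

lemma cyl2 (hiid : IsIID ν μbar) (f g : Fin n → Fin n) :
    μbar {F | F 1 = f ∧ F 2 = g} = ν {f} * ν {g} := by
  classical
  have h := hiid {1, 2} (fun s => if s = 1 then f else g)
  have hs : {F : ℕ → Fin n → Fin n | ∀ s ∈ ({1, 2} : Finset ℕ),
      F s = (fun s => if s = 1 then f else g) s} = {F | F 1 = f ∧ F 2 = g} := by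
    ext F
    simp only [Finset.mem_insert, Finset.mem_singleton, Set.mem_setOf_eq]
    constructor
    · intro h; exact ⟨by simpa using h 1 (Or.inl rfl), by simpa using h 2 (Or.inr rfl)⟩
    · rintro ⟨h1, h2⟩ s hs
      rcases hs with rfl | rfl <;> simp [h1, h2]
  rw [hs] at h
  rw [h, Finset.prod_pair (by norm_num)]
  simp

end aux
-- continuation, appended before `end aux` later
section tools
variable {n : ℕ} [MeasurableSpace (Fin n)] [DiscreteMeasurableSpace (Fin n)]
  {ν : Measure (Fin n → Fin n)} {μbar : Measure (ℕ → Fin n → Fin n)} {x y : Fin n}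

/-- packaged "only pair {x,y} coalesces" hypothesis -/
def Honly (μbar : Measure (ℕ → Fin n → Fin n)) (x y : Fin n) : Prop :=
  ∀ a b : Fin n, a ≠ b → 0 < μbar (coalEvent a b) →
    (a = x ∧ b = y) ∨ (a = y ∧ b = x)

lemma tool1 (hiid : IsIID ν μbar) (ho : Honly μbar x y) {f : Fin n → Fin n}
    (hf : 0 < ν {f}) {a b : Fin n} (hab : f a = f b) :
    a = b ∨ (a = x ∧ b = y) ∨ (a = y ∧ b = x) := by
  by_cases h : a = b
  · exact Or.inl h
  · refine Or.inr (ho a b h ?_)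
    have hsub : {F : ℕ → Fin n → Fin n | F 1 = f} ⊆ coalEvent a b := by
      intro F hF
      refine ⟨1, le_refl 1, ?_⟩
      have hF' : F 1 = f := hF
      show F 1 (fwd F 0 a) = F 1 (fwd F 0 b)
      show F 1 (id a) = F 1 (id b)
      rw [hF']; exact hab
    calc (0 : ℝ≥0∞) < ν {f} := hf
      _ = μbar {F | F 1 = f} := (cyl1 hiid 1 f).symm
      _ ≤ μbar (coalEvent a b) := measure_mono hsub

lemma tool2 (hiid : IsIID ν μbar) (ho : Honly μbar x y) {f g : Fin n → Fin n}
    (hf : 0 < ν {f}) (hg : 0 < ν {g}) {a b : Fin n} (hab : g (f a) = g (f b)) :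
    a = b ∨ (a = x ∧ b = y) ∨ (a = y ∧ b = x) := by
  by_cases h : a = b
  · exact Or.inl h
  · refine Or.inr (ho a b h ?_)
    have hsub : {F : ℕ → Fin n → Fin n | F 1 = f ∧ F 2 = g} ⊆ coalEvent a b := by
      rintro F ⟨h1, h2⟩
      refine ⟨2, by norm_num, ?_⟩
      show F 2 (F 1 (id a)) = F 2 (F 1 (id b))
      rw [h1, h2]; exact hab
    calc (0 : ℝ≥0∞) < ν {f} * ν {g} := by
          exact ENNReal.mul_pos (ne_of_gt hf) (ne_of_gt hg)
      _ = μbar {F | F 1 = f ∧ F 2 = g} := (cyl2 hiid f g).symm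
      _ ≤ μbar (coalEvent a b) := measure_mono hsub

lemma exists_merger (hiid : IsIID ν μbar) (ho : Honly μbar x y) (hxy : x ≠ y)
    (hpos : 0 < μbar (coalEvent x y)) : ∃ g : Fin n → Fin n, 0 < ν {g} ∧ g x = g y := by
  by_contra hcon
  push_neg at hcon
  have hinj : ∀ f : Fin n → Fin n, 0 < ν {f} → Function.Injective f := by
    intro f hf a b hab
    rcases tool1 hiid ho hf hab with h | ⟨hax, hby⟩ | ⟨hay, hbx⟩
    · exact h
    · exact absurd (by rw [← hax, ← hby, hab]) (fun h => hcon f hf h)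
    · exact absurd (by rw [← hay, ← hbx, hab.symm]) (fun h => hcon f hf h)
  have hsub : coalEvent x y ⊆ ⋃ s : ℕ, {F : ℕ → Fin n → Fin n | ν {F s} = 0} := by
    intro F hF
    by_contra hc
    simp only [Set.mem_iUnion, Set.mem_setOf_eq, not_exists] at hc
    have hFt : ∀ t, Function.Injective (fwd F t) := by
      intro t
      induction t with
      | zero => exact fun a b h => h
      | succ t ih =>
        intro a b h
        exact ih (hinj (F (t + 1)) (pos_iff_ne_zero.mpr (hc (t + 1))) h)
    obtain ⟨t, _, ht2⟩ := hF
    exact hxy (hFt t ht2)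
  have hnull : μbar (coalEvent x y) = 0 := by
    refine measure_mono_null hsub (measure_iUnion_null fun s => ?_)
    have hsub2 : {F : ℕ → Fin n → Fin n | ν {F s} = 0} ⊆
        ⋃ g ∈ {g : Fin n → Fin n | ν {g} = 0}, {F : ℕ → Fin n → Fin n | F s = g} :=
      fun F hF => Set.mem_biUnion hF rfl
    refine measure_mono_null hsub2 ?_
    rw [measure_biUnion_null_iff (Set.to_countable _)]
    intro g hg
    rw [cyl1 hiid s g]
    exact hg
  rw [hnull] at hpos
  exact lt_irrefl 0 hpos

lemma tool3 (hiid : IsIID ν μbar) (ho : Honly μbar x y) (hxy : x ≠ y)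
    (hpos : 0 < μbar (coalEvent x y)) {f : Fin n → Fin n} (hf : 0 < ν {f})
    {a b : Fin n} (ha : f a = x) (hb : f b = y) :
    (a = x ∧ b = y) ∨ (a = y ∧ b = x) := by
  obtain ⟨g, hg, hgxy⟩ := exists_merger hiid ho hxy hpos
  have h2 : g (f a) = g (f b) := by rw [ha, hb, hgxy]
  rcases tool2 hiid ho hf hg h2 with h | h | h
  · exact absurd (by rw [← ha, ← hb, h]) hxy
  · exact Or.inl h
  · exact Or.inr h

end tools

section struct
variable {n : ℕ} [MeasurableSpace (Fin n)] [DiscreteMeasurableSpace (Fin n)]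
  {ν : Measure (Fin n → Fin n)} {μbar : Measure (ℕ → Fin n → Fin n)} {x y : Fin n}

/-- Every support function either merges `x,y` (and then no two states map onto `x` and `y`),
or fixes the pair `{x,y}` setwise. -/
lemma structure_main (hiid : IsIID ν μbar) (ho : Honly μbar x y) (hxy : x ≠ y)
    (hpos : 0 < μbar (coalEvent x y)) {f : Fin n → Fin n} (hf : 0 < ν {f}) :
    (f x = f y ∧ ¬ ∃ a b : Fin n, f a = x ∧ f b = y) ∨
      ((f x = x ∧ f y = y) ∨ (f x = y ∧ f y = x)) := by
  by_cases hc : f x = f y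
  · left
    refine ⟨hc, ?_⟩
    rintro ⟨a, b, ha, hb⟩
    rcases tool3 hiid ho hxy hpos hf ha hb with ⟨h1, h2⟩ | ⟨h1, h2⟩
    · exact hxy (ha.symm.trans ((congrArg f h1).trans
        (hc.trans ((congrArg f h2.symm).trans hb))))
    · exact hxy (ha.symm.trans ((congrArg f h1).trans
        (hc.symm.trans ((congrArg f h2.symm).trans hb))))
  · right
    have hinj : Function.Injective f := by
      intro a b hab
      rcases tool1 hiid ho hf hab with h | ⟨rfl, rfl⟩ | ⟨rfl, rfl⟩
      · exact h
      · exact absurd hab hc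
      · exact absurd hab.symm hc
    have hsurj : Function.Surjective f := Finite.surjective_of_injective hinj
    obtain ⟨a, ha⟩ := hsurj x
    obtain ⟨b, hb⟩ := hsurj y
    rcases tool3 hiid ho hxy hpos hf ha hb with ⟨h1, h2⟩ | ⟨h1, h2⟩
    · exact Or.inl ⟨(congrArg f h1).symm.trans ha, (congrArg f h2).symm.trans hb⟩
    · exact Or.inr ⟨(congrArg f h2).symm.trans hb, (congrArg f h1).symm.trans ha⟩

/-- If `f x` stays in `{x,y}`, nothing from outside enters `{x,y}`. -/
lemma keyB (hiid : IsIID ν μbar) (ho : Honly μbar x y) (hxy : x ≠ y)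
    (hpos : 0 < μbar (coalEvent x y)) {f : Fin n → Fin n} (hf : 0 < ν {f})
    (hin : f x = x ∨ f x = y) {i : Fin n} (hix : i ≠ x) (hiy : i ≠ y) :
    f i ≠ x ∧ f i ≠ y := by
  have noti : ∀ c : Fin n, f i = f c → (c = x ∨ c = y) → False := by
    intro c hic hcxy
    rcases tool1 hiid ho hf hic with h | ⟨h1, h2⟩ | ⟨h1, h2⟩
    · rcases hcxy with rfl | rfl
      · exact hix h
      · exact hiy h
    · exact hix h1
    · exact hiy h1
  rcases structure_main hiid ho hxy hpos hf with ⟨hm, hnb⟩ | ⟨h1, h2⟩ | ⟨h1, h2⟩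
  · -- merging case: f x = f y = c ∈ {x,y}
    constructor
    · intro hfi
      rcases hin with hx | hx
      · exact noti x (by rw [hfi, hx]) (Or.inl rfl)
      · -- f x = y and f i = x: both x and y in range
        exact hnb ⟨i, x, hfi, hx⟩
    · intro hfi
      rcases hin with hx | hx
      · exact hnb ⟨x, i, hx, hfi⟩
      · exact noti y (by rw [hfi, ← hm, hx]) (Or.inr rfl)
  · exact ⟨fun h => noti x (by rw [h, h1]) (Or.inl rfl),
      fun h => noti y (by rw [h, h2]) (Or.inr rfl)⟩
  · exact ⟨fun h => noti y (by rw [h, h2]) (Or.inr rfl),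
      fun h => noti x (by rw [h, h1]) (Or.inl rfl)⟩

/-- If `f x` leaves `{x,y}`, then `f y = f x` and exactly one outside state enters `{x,y}`. -/
lemma keyC (hn : 3 ≤ n) (hiid : IsIID ν μbar) (ho : Honly μbar x y) (hxy : x ≠ y)
    (hpos : 0 < μbar (coalEvent x y)) {f : Fin n → Fin n} (hf : 0 < ν {f})
    (hout : f x ≠ x ∧ f x ≠ y) :
    f x = f y ∧ ∃ a : Fin n, (a ≠ x ∧ a ≠ y ∧ (f a = x ∨ f a = y)) ∧
      ∀ b : Fin n, b ≠ x → b ≠ y → (f b = x ∨ f b = y) → b = a := by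
  classical
  rcases structure_main hiid ho hxy hpos hf with ⟨hm, hnb⟩ | ⟨h1, _⟩ | ⟨h1, _⟩
  swap
  · exact absurd h1 hout.1
  swap
  · exact absurd h1 hout.2
  refine ⟨hm, ?_⟩
  -- f is injective away from y
  have hinj : Set.InjOn f (Finset.univ.erase y : Finset (Fin n)) := by
    intro a ha b hb hab
    simp only [Finset.coe_erase, Set.mem_diff, Set.mem_singleton_iff] at ha hb
    rcases tool1 hiid ho hf hab with h | ⟨rfl, rfl⟩ | ⟨rfl, rfl⟩
    · exact h
    · exact absurd rfl hb.2
    · exact absurd rfl ha.2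
  -- the image of univ.erase y has n - 1 elements, so it meets {x, y}
  have hcard : ((Finset.univ.erase y).image f).card = n - 1 := by
    rw [Finset.card_image_of_injOn hinj, Finset.card_erase_of_mem (Finset.mem_univ y),
      Finset.card_univ, Fintype.card_fin]
  have hmeet : ∃ a ∈ Finset.univ.erase y, f a = x ∨ f a = y := by
    by_contra hcon
    push_neg at hcon
    have hsub : (Finset.univ.erase y).image f ⊆ Finset.univ \ {x, y} := by
      intro c hc
      simp only [Finset.mem_image] at hc
      obtain ⟨a, ha, rfl⟩ := hc
      have := hcon a ha
      simp only [Finset.mem_sdiff, Finset.mem_univ, Finset.mem_insert,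
        Finset.mem_singleton, true_and]
      tauto
    have hle := Finset.card_le_card hsub
    rw [hcard, Finset.card_sdiff_of_subset (by intro c _; exact Finset.mem_univ c)] at hle
    rw [Finset.card_univ, Fintype.card_fin, Finset.card_insert_of_notMem
      (by simpa using hxy), Finset.card_singleton] at hle
    omega
  obtain ⟨a, ha, hfa⟩ := hmeet
  have hay : a ≠ y := Finset.ne_of_mem_erase ha
  have hax : a ≠ x := by
    rintro rfl
    rcases hfa with h | h
    · exact hout.1 h
    · exact hout.2 h
  refine ⟨a, ⟨hax, hay, hfa⟩, ?_⟩
  intro b hbx hby hfb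
  have hfab : f b = f a := by
    rcases hfa with h | h <;> rcases hfb with h' | h'
    · rw [h, h']
    · exact absurd ⟨a, b, h, h'⟩ hnb
    · exact absurd ⟨b, a, h', h⟩ hnb
    · rw [h, h']
  rcases tool1 hiid ho hf hfab with h | ⟨rfl, _⟩ | ⟨rfl, _⟩
  · exact h
  · exact absurd rfl hbx
  · exact absurd rfl hby

end struct

section main
variable {n : ℕ} [MeasurableSpace (Fin n)] [DiscreteMeasurableSpace (Fin n)]
  {ν : Measure (Fin n → Fin n)} {μbar : Measure (ℕ → Fin n → Fin n)}

theorem main_aux (hn : 3 ≤ n) (x y : Fin n) (hx : (x : ℕ) = 0) (hy : (y : ℕ) = 1)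
    (P : Fin n → Fin n → ℝ) (hP : IsStochastic P) [IsProbabilityMeasure ν]
    (hcons : Consistent P ν) (hiid : IsIID ν μbar)
    (hpos : 0 < μbar (coalEvent x y)) (ho : Honly μbar x y) :
    (∑ j ∈ Finset.univ.filter (fun j : Fin n => 2 ≤ (j : ℕ)), P x j) =
      (∑ j ∈ Finset.univ.filter (fun j : Fin n => 2 ≤ (j : ℕ)), P y j) ∧
    (∑ j ∈ Finset.univ.filter (fun j : Fin n => 2 ≤ (j : ℕ)), P x j) =
      (∑ i ∈ Finset.univ.filter (fun i : Fin n => 2 ≤ (i : ℕ)), (P i x + P i y)) := by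
  classical
  have hxy : x ≠ y := by intro h; rw [Fin.ext_iff, hx, hy] at h; omega
  have hb : ∀ j : Fin n, (j = x ∨ j = y) ↔ ¬ 2 ≤ (j : ℕ) := by
    intro j
    rw [Fin.ext_iff, Fin.ext_iff, hx, hy]
    omega
  set T := Finset.univ.filter (fun j : Fin n => 2 ≤ (j : ℕ)) with hT
  have hPt : ∀ i j, P i j = (ν {f : Fin n → Fin n | f i = j}).toReal := fun i j => by
    rw [hcons i j, ENNReal.toReal_ofReal (hP.1 i j)]
  have hfib : ∀ (i c : Fin n), ν {f : Fin n → Fin n | f i = c}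
      = ∑ f : Fin n → Fin n, (if f i = c then ν {f} else 0) := by
    intro i c
    rw [meas_set, ← Finset.sum_filter]
    exact Finset.sum_congr (by ext f; simp) fun _ _ => rfl
  have row : ∀ z : Fin n, (∑ j ∈ T, ν {f : Fin n → Fin n | f z = j})
      = ∑ f : Fin n → Fin n, (if 2 ≤ ((f z : ℕ)) then ν {f} else 0) := by
    intro z
    calc (∑ j ∈ T, ν {f : Fin n → Fin n | f z = j})
        = ∑ j ∈ T, ∑ f : Fin n → Fin n, (if f z = j then ν {f} else 0) :=
          Finset.sum_congr rfl fun j _ => hfib z j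
      _ = ∑ f : Fin n → Fin n, ∑ j ∈ T, (if f z = j then ν {f} else 0) := Finset.sum_comm
      _ = ∑ f : Fin n → Fin n, (if 2 ≤ ((f z : ℕ)) then ν {f} else 0) := by
          refine Finset.sum_congr rfl fun f _ => ?_
          rw [Finset.sum_ite_eq T (f z) fun _ => ν {f}]
          simp [hT]
  have col : (∑ i ∈ T, (ν {f : Fin n → Fin n | f i = x} + ν {f : Fin n → Fin n | f i = y}))
      = ∑ f : Fin n → Fin n, ∑ i ∈ T,
          ((if f i = x then ν {f} else 0) + (if f i = y then ν {f} else 0)) := by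
    calc (∑ i ∈ T, (ν {f : Fin n → Fin n | f i = x} + ν {f : Fin n → Fin n | f i = y}))
        = ∑ i ∈ T, ∑ f : Fin n → Fin n,
            ((if f i = x then ν {f} else 0) + (if f i = y then ν {f} else 0)) := by
          refine Finset.sum_congr rfl fun i _ => ?_
          rw [hfib i x, hfib i y, ← Finset.sum_add_distrib]
      _ = _ := Finset.sum_comm
  -- pointwise facts
  have ptA : ∀ f : Fin n → Fin n,
      (if 2 ≤ ((f x : ℕ)) then ν {f} else 0) = (if 2 ≤ ((f y : ℕ)) then ν {f} else 0) := by
    intro f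
    by_cases hzero : ν {f} = 0
    · simp [hzero]
    · have hf : 0 < ν {f} := pos_iff_ne_zero.mpr hzero
      rcases structure_main hiid ho hxy hpos hf with ⟨hm, _⟩ | ⟨h1, h2⟩ | ⟨h1, h2⟩
      · rw [hm]
      · rw [if_neg ((hb (f x)).mp (Or.inl h1)), if_neg ((hb (f y)).mp (Or.inr h2))]
      · rw [if_neg ((hb (f x)).mp (Or.inr h1)), if_neg ((hb (f y)).mp (Or.inl h2))]
  have ptB : ∀ f : Fin n → Fin n,
      (if 2 ≤ ((f x : ℕ)) then ν {f} else 0) =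
        ∑ i ∈ T, ((if f i = x then ν {f} else 0) + (if f i = y then ν {f} else 0)) := by
    intro f
    by_cases hzero : ν {f} = 0
    · simp [hzero]
    · have hf : 0 < ν {f} := pos_iff_ne_zero.mpr hzero
      by_cases hout : 2 ≤ ((f x : ℕ))
      · rw [if_pos hout]
        have hout' : f x ≠ x ∧ f x ≠ y :=
          ⟨fun h => (hb (f x)).mp (Or.inl h) hout, fun h => (hb (f x)).mp (Or.inr h) hout⟩
        obtain ⟨hm, a, ⟨hax, hay, hfa⟩, huniq⟩ := keyC hn hiid ho hxy hpos hf hout'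
        have ha2 : 2 ≤ ((a : ℕ)) := by
          by_contra hc
          rcases (hb a).mpr hc with rfl | rfl
          · exact hax rfl
          · exact hay rfl
        have haT : a ∈ T := by simp [hT, ha2]
        rw [Finset.sum_eq_single_of_mem a haT ?_]
        · rcases hfa with h | h
          · rw [if_pos h, if_neg (fun h' => hxy (h.symm.trans h')), add_zero]
          · rw [if_pos h, if_neg (fun h' => hxy (h'.symm.trans h)), zero_add]
        · intro b hbT hba
          have hb2 : 2 ≤ ((b : ℕ)) := by simpa [hT] using hbT
          have hbx : b ≠ x := fun h => (hb b).mp (Or.inl h) hb2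
          have hby : b ≠ y := fun h => (hb b).mp (Or.inr h) hb2
          rw [if_neg, if_neg, add_zero]
          · intro h; exact hba (huniq b hbx hby (Or.inr h))
          · intro h; exact hba (huniq b hbx hby (Or.inl h))
      · rw [if_neg hout]
        have hin : f x = x ∨ f x = y := (hb (f x)).mpr hout
        refine (Finset.sum_eq_zero fun i hiT => ?_).symm
        have hi2 : 2 ≤ ((i : ℕ)) := by simpa [hT] using hiT
        have hix : i ≠ x := fun h => (hb i).mp (Or.inl h) hi2
        have hiy : i ≠ y := fun h => (hb i).mp (Or.inr h) hi2
        obtain ⟨h1, h2⟩ := keyB hiid ho hxy hpos hf hin hix hiy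
        rw [if_neg h1, if_neg h2, add_zero]
  -- ENNReal identities
  have E1 : (∑ j ∈ T, ν {f : Fin n → Fin n | f x = j})
      = ∑ j ∈ T, ν {f : Fin n → Fin n | f y = j} := by
    rw [row x, row y]
    exact Finset.sum_congr rfl fun f _ => ptA f
  have E2 : (∑ j ∈ T, ν {f : Fin n → Fin n | f x = j})
      = ∑ i ∈ T, (ν {f : Fin n → Fin n | f i = x} + ν {f : Fin n → Fin n | f i = y}) := by
    rw [row x, col]
    exact Finset.sum_congr rfl fun f _ => ptB f
  -- convert to ℝ
  have hrow : ∀ z : Fin n, (∑ j ∈ T, P z j) = (∑ j ∈ T, ν {f : Fin n → Fin n | f z = j}).toReal := by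
    intro z
    rw [ENNReal.toReal_sum fun j _ => measure_ne_top ν _]
    exact Finset.sum_congr rfl fun j _ => hPt z j
  constructor
  · rw [hrow x, hrow y, E1]
  · rw [hrow x, E2, ENNReal.toReal_sum fun i _ => (by
      exact ENNReal.add_ne_top.mpr ⟨measure_ne_top ν _, measure_ne_top ν _⟩)]
    refine Finset.sum_congr rfl fun i _ => ?_
    rw [ENNReal.toReal_add (measure_ne_top ν _) (measure_ne_top ν _), hPt i x, hPt i y]

end main


-- STATEMENT 16
theorem stmt16 (n : ℕ) (hn : 3 ≤ n)
    [MeasurableSpace (Fin n)] [DiscreteMeasurableSpace (Fin n)]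
    (P : Fin n → Fin n → ℝ) (hP : IsStochastic P) (hirr : Irred P)
    (ν : Measure (Fin n → Fin n)) [IsProbabilityMeasure ν] (hcons : Consistent P ν)
    (μbar : Measure (ℕ → Fin n → Fin n)) [IsProbabilityMeasure μbar]
    (hiid : IsIID ν μbar)
    (hpos : 0 < μbar (coalEvent (⟨0, by omega⟩ : Fin n) (⟨1, by omega⟩ : Fin n)))
    (honly : ∀ i j : Fin n, i ≠ j → 0 < μbar (coalEvent i j) →
      (i = (⟨0, by omega⟩ : Fin n) ∧ j = (⟨1, by omega⟩ : Fin n)) ∨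
      (i = (⟨1, by omega⟩ : Fin n) ∧ j = (⟨0, by omega⟩ : Fin n))) :
    (∑ j ∈ Finset.univ.filter (fun j : Fin n => 2 ≤ (j : ℕ)),
        P (⟨0, by omega⟩ : Fin n) j) =
      (∑ j ∈ Finset.univ.filter (fun j : Fin n => 2 ≤ (j : ℕ)),
        P (⟨1, by omega⟩ : Fin n) j) ∧
    (∑ j ∈ Finset.univ.filter (fun j : Fin n => 2 ≤ (j : ℕ)),
        P (⟨0, by omega⟩ : Fin n) j) =
      (∑ i ∈ Finset.univ.filter (fun i : Fin n => 2 ≤ (i : ℕ)),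
        (P i (⟨0, by omega⟩ : Fin n) + P i (⟨1, by omega⟩ : Fin n))) := by
  exact main_aux hn ⟨0, by omega⟩ ⟨1, by omega⟩ rfl rfl P hP hcons hiid hpos
    (fun a b hab hp => honly a b hab hp)

end CFTP
end

section
/- Let S be a finite set with |S| = n ≥ 2, let P_n be the stochastic matrix on S with all entries equal to 1/n, and let l ≥ 1 divide n. Then there exists a block measure μ consistent with P_n having coalescence number k(μ) = l; in particular, K(P_n) contains every divisor of n. -/
open MeasureTheory
open scoped ENNReal

namespace CFTP

variable {S : Type*}

section Aux
open Finset
variable {l m : ℕ} {S : Type*}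

/-- block shift maps -/
def Phi [NeZero l] [NeZero m] (e : S ≃ Fin l × Fin m) (t : Fin l × (Fin l → Fin m)) : S → S :=
  fun i => e.symm ((e i).1 + t.1, t.2 ((e i).1 + t.1))

variable [NeZero l] [NeZero m] [DecidableEq S] (e : S ≃ Fin l × Fin m)

lemma Phi_fst (t : Fin l × (Fin l → Fin m)) (i : S) :
    (e (Phi e t i)).1 = (e i).1 + t.1 := by simp [Phi]

lemma Phi_comp (t t' : Fin l × (Fin l → Fin m)) :
    Phi e t' ∘ Phi e t = Phi e (t.1 + t'.1, t'.2) := by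
  funext i
  simp [Phi, add_assoc]

lemma Phi_inj : Function.Injective (Phi e) := by
  intro t t' h
  have h1 : t.1 = t'.1 := by
    have := congrArg (fun f => (e (f (e.symm (0, 0)))).1) h
    simpa [Phi_fst] using this
  have h2 : t.2 = t'.2 := by
    funext r
    have := congrArg (fun f => (e (f (e.symm (r - t.1, 0)))).2) h
    simpa [Phi, h1, sub_add_cancel] using this
  exact Prod.ext h1 h2

lemma range_Phi_ncard (t : Fin l × (Fin l → Fin m)) :
    (Set.range (Phi e t)).ncard = l := by
  have hrange : Set.range (Phi e t) = Set.range (fun r : Fin l => e.symm (r, t.2 r)) := by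
    apply Set.Subset.antisymm
    · rintro _ ⟨i, rfl⟩; exact ⟨(e i).1 + t.1, rfl⟩
    · rintro _ ⟨r, rfl⟩
      exact ⟨e.symm (r - t.1, 0), by simp [Phi, sub_add_cancel]⟩
  have hinj : Function.Injective (fun r : Fin l => e.symm (r, t.2 r)) := by
    intro r r' h
    have := e.symm.injective h
    exact (Prod.ext_iff.1 this).1
  rw [hrange, ← Nat.card_coe_set_eq, Nat.card_range_of_injective hinj]
  simp

lemma card_filter_eval (i j : S) :
    (univ.filter fun t : Fin l × (Fin l → Fin m) => Phi e t i = j).card = m ^ (l - 1) := by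
  set r0 := (e j).1
  set y0 := (e j).2
  set d0 := r0 - (e i).1
  have hiff : ∀ t : Fin l × (Fin l → Fin m), (Phi e t i = j ↔ t.1 = d0 ∧ t.2 r0 = y0) := by
    intro t
    constructor
    · intro h
      have h' : ((e i).1 + t.1, t.2 ((e i).1 + t.1)) = e j := by
        rw [← Equiv.symm_apply_eq]; exact h
      have h1 : (e i).1 + t.1 = r0 := (Prod.ext_iff.1 h').1
      refine ⟨eq_sub_of_add_eq' h1, ?_⟩
      have h2 := (Prod.ext_iff.1 h').2
      rwa [h1] at h2
    · rintro ⟨h1, h2⟩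
      have hr : (e i).1 + t.1 = r0 := by rw [h1]; simp [d0, add_comm, sub_add_cancel]
      simp only [Phi, hr, h2, y0, r0]
      simp [Equiv.symm_apply_eq]
  have hset : (univ.filter fun t : Fin l × (Fin l → Fin m) => Phi e t i = j)
      = univ.filter fun t => t.1 = d0 ∧ t.2 r0 = y0 := by
    apply Finset.filter_congr; intro t _; exact (hiff t)
  rw [hset, ← Fintype.card_subtype]
  have E : {t : Fin l × (Fin l → Fin m) // t.1 = d0 ∧ t.2 r0 = y0}
      ≃ ({r : Fin l // r ≠ r0} → Fin m) :=
    { toFun := fun t r => t.1.2 r.1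
      invFun := fun h => ⟨(d0, fun r => if hr : r = r0 then y0 else h ⟨r, hr⟩), rfl, by simp⟩
      left_inv := by
        rintro ⟨⟨d, c⟩, hd, hc⟩
        apply Subtype.ext
        dsimp at hd hc ⊢
        subst hd
        refine Prod.ext rfl ?_
        funext r
        by_cases hr : r = r0
        · subst hr; simp [hc]
        · simp [hr]
      right_inv := by
        intro h; funext r; simp [r.2] }
  rw [Fintype.card_congr E, Fintype.card_fun, Fintype.card_fin]
  congr 1
  simp [Fintype.card_subtype_compl]

end Aux

section Haar
open TopologicalSpace Finset

variable (T : Type*) [Fintype T] [Nonempty T] [AddCommGroup T]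

private def tTop : TopologicalSpace T := ⊥
attribute [local instance] tTop
private def tDisc : DiscreteTopology T := ⟨rfl⟩
attribute [local instance] tDisc
private def tMeas : MeasurableSpace T := ⊤
attribute [local instance] tMeas
private def tBorel : BorelSpace T := ⟨borel_eq_top_of_discrete.symm⟩
attribute [local instance] tBorel
private def tTAG : IsTopologicalAddGroup T :=
  { continuous_add := continuous_of_discreteTopology
    continuous_neg := continuous_of_discreteTopology }
attribute [local instance] tTAG

/-- Haar probability measure on the compact group `ℕ → T`. -/
noncomputable def haarP : Measure (ℕ → T) :=
  Measure.addHaarMeasure (⊤ : PositiveCompacts (ℕ → T))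

lemma haarP_univ : haarP T Set.univ = 1 := by
  have := Measure.addHaarMeasure_self (K₀ := (⊤ : PositiveCompacts (ℕ → T)))
  rwa [PositiveCompacts.coe_top] at this

lemma haarP_cyl_measurable (I : Finset ℕ) (g : ℕ → T) :
    MeasurableSet {τ : ℕ → T | ∀ s ∈ I, τ s = g s} := by
  have : {τ : ℕ → T | ∀ s ∈ I, τ s = g s} = ⋂ s ∈ I, (fun τ : ℕ → T => τ s) ⁻¹' {g s} := by
    ext τ; simp
  rw [this]
  exact MeasurableSet.biInter I.countable_toSet
    (fun s _ => measurable_pi_apply s (by trivial))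

lemma haarP_cyl_inv (I : Finset ℕ) (g g' : ℕ → T) :
    haarP T {τ : ℕ → T | ∀ s ∈ I, τ s = g s}
      = haarP T {τ : ℕ → T | ∀ s ∈ I, τ s = g' s} := by
  haveI : (haarP T).IsAddLeftInvariant := by unfold haarP; infer_instance
  have key : {τ : ℕ → T | ∀ s ∈ I, τ s = g s}
      = (fun τ => (g' - g) + τ) ⁻¹' {τ : ℕ → T | ∀ s ∈ I, τ s = g' s} := by
    ext τ
    simp only [Set.mem_preimage, Set.mem_setOf_eq, Pi.add_apply, Pi.sub_apply]
    refine forall₂_congr fun s _ => ?_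
    constructor
    · intro h; rw [h]; abel
    · intro h
      have : g' s - g s + τ s = g' s - g s + g s := by rw [h]; abel
      exact add_left_cancel this
  rw [key, measure_preimage_add]

lemma haarP_cyl (I : Finset ℕ) (g : ℕ → T) :
    haarP T {τ : ℕ → T | ∀ s ∈ I, τ s = g s}
      = (Fintype.card T : ℝ≥0∞)⁻¹ ^ I.card := by
  classical
  set μ := haarP T with hμ
  set c := μ {τ : ℕ → T | ∀ s ∈ I, τ s = g s} with hc
  set N := Fintype.card T with hN
  set k := I.card with hk
  let ext : (I → T) → (ℕ → T) := fun v s =>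
    if h : s ∈ I then v ⟨s, h⟩ else Classical.arbitrary T
  have hval : ∀ (v : I → T) (s : ℕ) (hs : s ∈ I), ext v s = v ⟨s, hs⟩ :=
    fun v s hs => dif_pos hs
  have hcv : ∀ v : I → T, μ {τ : ℕ → T | ∀ s ∈ I, τ s = ext v s} = c :=
    fun v => haarP_cyl_inv T I _ g
  have hcover : (Set.univ : Set (ℕ → T))
      = ⋃ v : I → T, {τ : ℕ → T | ∀ s ∈ I, τ s = ext v s} := by
    ext τ
    simp only [Set.mem_univ, true_iff, Set.mem_iUnion, Set.mem_setOf_eq]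
    exact ⟨fun s => τ s.1, fun s hs => (hval (fun s => τ s.1) s hs).symm⟩
  have hdisj : Pairwise (Function.onFun Disjoint
      (fun v : I → T => {τ : ℕ → T | ∀ s ∈ I, τ s = ext v s})) := by
    intro v w hvw
    rw [Function.onFun, Set.disjoint_left]
    intro τ hv hw
    apply hvw
    funext s
    have h1 := hv s.1 s.2
    have h2 := hw s.1 s.2
    rw [hval _ s.1 s.2] at h1
    rw [hval _ s.1 s.2] at h2
    rw [← h1, ← h2]
  have hmeas : ∀ v : I → T,
      MeasurableSet {τ : ℕ → T | ∀ s ∈ I, τ s = ext v s} :=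
    fun v => haarP_cyl_measurable T I _
  have hsum : μ Set.univ = ∑' v : I → T, c := by
    rw [hcover, measure_iUnion hdisj hmeas]
    exact tsum_congr hcv
  have huniv : μ Set.univ = 1 := haarP_univ T
  have hcardfun : Fintype.card (I → T) = N ^ k := by
    rw [Fintype.card_fun, Fintype.card_coe]
  have h1 : ((N : ℝ≥0∞) ^ k) * c = 1 := by
    rw [← huniv, hsum, tsum_fintype, Finset.sum_const, Finset.card_univ, hcardfun, nsmul_eq_mul]
    push_cast
    ring
  have hN0 : (N : ℝ≥0∞) ≠ 0 := by
    simp [hN, Fintype.card_ne_zero]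
  have hNtop : (N : ℝ≥0∞) ≠ ⊤ := ENNReal.natCast_ne_top N
  have hpow0 : ((N : ℝ≥0∞) ^ k) ≠ 0 := pow_ne_zero k hN0
  have hpowtop : ((N : ℝ≥0∞) ^ k) ≠ ⊤ := by
    exact ENNReal.pow_ne_top hNtop
  calc c = (((N : ℝ≥0∞) ^ k)⁻¹ * ((N : ℝ≥0∞) ^ k)) * c := by
            rw [ENNReal.inv_mul_cancel hpow0 hpowtop, one_mul]
    _ = ((N : ℝ≥0∞) ^ k)⁻¹ * (((N : ℝ≥0∞) ^ k) * c) := by ring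
    _ = ((N : ℝ≥0∞) ^ k)⁻¹ := by rw [h1, mul_one]
    _ = (N : ℝ≥0∞)⁻¹ ^ k := by rw [ENNReal.inv_pow]


lemma exists_iid {X : Type*} [MeasurableSpace X] [MeasurableSingletonClass X] [Countable X]
    [DecidableEq X] (φ : T → X) (hφ : Function.Injective φ) :
    ∃ μbar : Measure (ℕ → X), IsProbabilityMeasure μbar ∧
      (∀ (I : Finset ℕ) (g : ℕ → X),
        μbar {F | ∀ s ∈ I, F s = g s}
          = ∏ s ∈ I, ((Fintype.card T : ℝ≥0∞)⁻¹
              * ((Finset.univ.filter fun t => φ t = g s).card : ℝ≥0∞))) ∧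
      (∀ A : Set (ℕ → X), (∀ F, (∀ s, F s ∈ Set.range φ) → F ∈ A) → μbar A = 1) := by
  let Ψ : (ℕ → T) → (ℕ → X) := fun τ s => φ (τ s)
  have hΨ : Measurable Ψ :=
    measurable_pi_lambda _ (fun s => measurable_from_top.comp (measurable_pi_apply s))
  haveI : IsProbabilityMeasure (haarP T) := ⟨haarP_univ T⟩
  haveI : IsProbabilityMeasure ((haarP T).map Ψ) := Measure.isProbabilityMeasure_map hΨ.aemeasurable
  refine ⟨(haarP T).map Ψ, inferInstance, ?_, ?_⟩
  · intro I g
    have hmA : MeasurableSet {F : ℕ → X | ∀ s ∈ I, F s = g s} := by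
      have h : {F : ℕ → X | ∀ s ∈ I, F s = g s}
          = ⋂ s ∈ I, (fun F : ℕ → X => F s) ⁻¹' {g s} := by ext; simp
      rw [h]
      exact MeasurableSet.biInter I.countable_toSet
        (fun s _ => measurable_pi_apply s (measurableSet_singleton _))
    rw [Measure.map_apply hΨ hmA]
    by_cases hall : ∀ s ∈ I, g s ∈ Set.range φ
    · let τ0 : ℕ → T := fun s => if h : ∃ t, φ t = g s then h.choose else Classical.arbitrary T
      have hτ0 : ∀ s ∈ I, φ (τ0 s) = g s := by
        intro s hs
        obtain ⟨t, ht⟩ := hall s hs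
        have hex : ∃ t, φ t = g s := ⟨t, ht⟩
        simp only [τ0, dif_pos hex]
        exact hex.choose_spec
      have hset : Ψ ⁻¹' {F | ∀ s ∈ I, F s = g s} = {τ | ∀ s ∈ I, τ s = τ0 s} := by
        ext τ
        simp only [Set.mem_preimage, Set.mem_setOf_eq, Ψ]
        refine forall₂_congr fun s hs => ?_
        rw [← hτ0 s hs]
        exact ⟨fun h => hφ h, fun h => by rw [h]⟩
      rw [hset, haarP_cyl]
      have hfac : ∀ s ∈ I, ((Fintype.card T : ℝ≥0∞)⁻¹
          * ((Finset.univ.filter fun t => φ t = g s).card : ℝ≥0∞))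
            = (Fintype.card T : ℝ≥0∞)⁻¹ := by
        intro s hs
        have h : (Finset.univ.filter fun t => φ t = g s) = {τ0 s} := by
          ext t
          simp only [mem_filter, mem_univ, true_and, mem_singleton]
          rw [← hτ0 s hs]
          exact ⟨fun h => hφ h, fun h => by rw [h]⟩
        rw [h]
        simp
      rw [Finset.prod_congr rfl hfac, Finset.prod_const]
    · push_neg at hall
      obtain ⟨s0, hs0, hns0⟩ := hall
      have hempty : Ψ ⁻¹' {F | ∀ s ∈ I, F s = g s} = ∅ := by
        ext τ
        simp only [Set.mem_preimage, Set.mem_setOf_eq, Set.mem_empty_iff_false, iff_false,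
          not_forall, Ψ]
        exact ⟨s0, hs0, fun h => hns0 ⟨τ s0, h⟩⟩
      rw [hempty, measure_empty]
      symm
      apply Finset.prod_eq_zero hs0
      have h : (Finset.univ.filter fun t => φ t = g s0) = ∅ := by
        ext t
        simp only [mem_filter, mem_univ, true_and, notMem_empty, iff_false]
        exact fun h => hns0 ⟨t, h⟩
      rw [h]
      simp
  · intro A hA
    have hsub : Aᶜ ⊆ ⋃ s : ℕ, (fun F : ℕ → X => F s) ⁻¹' (Set.range φ)ᶜ := by
      intro F hF
      by_contra h
      simp only [Set.mem_iUnion, Set.mem_preimage, Set.mem_compl_iff, not_exists, not_not] at h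
      exact hF (hA F h)
    have hz : ∀ s : ℕ, ((haarP T).map Ψ) ((fun F : ℕ → X => F s) ⁻¹' (Set.range φ)ᶜ) = 0 := by
      intro s
      have hms : MeasurableSet ((fun F : ℕ → X => F s) ⁻¹' (Set.range φ)ᶜ) :=
        measurable_pi_apply s (Set.to_countable _).measurableSet.compl
      rw [Measure.map_apply hΨ hms]
      have h : Ψ ⁻¹' ((fun F : ℕ → X => F s) ⁻¹' (Set.range φ)ᶜ) = ∅ := by
        ext τ
        simp [Ψ]
      rw [h, measure_empty]
    have hc0 : ((haarP T).map Ψ) Aᶜ = 0 := by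
      refine le_antisymm ?_ zero_le
      calc ((haarP T).map Ψ) Aᶜ
          ≤ ((haarP T).map Ψ) (⋃ s : ℕ, (fun F : ℕ → X => F s) ⁻¹' (Set.range φ)ᶜ) :=
            measure_mono hsub
        _ ≤ ∑' s : ℕ, ((haarP T).map Ψ) ((fun F : ℕ → X => F s) ⁻¹' (Set.range φ)ᶜ) :=
            measure_iUnion_le _
        _ = 0 := by rw [ENNReal.tsum_eq_zero]; exact hz
    have h1 : (1:ℝ≥0∞) ≤ ((haarP T).map Ψ) A := by
      have h := measure_union_le (μ := (haarP T).map Ψ) A Aᶜ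
      rw [Set.union_compl_self, measure_univ, hc0, add_zero] at h
      exact h
    exact le_antisymm prob_le_one h1

end Haar


section Nu
open Finset
open scoped Classical
variable {l m : ℕ} [NeZero l] [NeZero m] {S : Type*} [Fintype S] [DecidableEq S]
  [MeasurableSpace S] [DiscreteMeasurableSpace S]

/-- The uniform measure on block-shift maps. -/
noncomputable def nuM (e : S ≃ Fin l × Fin m) : Measure (S → S) :=
  ((Fintype.card (Fin l × (Fin l → Fin m)) : ℝ≥0∞))⁻¹
    • ∑ t : Fin l × (Fin l → Fin m), Measure.dirac (Phi e t)

lemma nuM_apply (e : S ≃ Fin l × Fin m) (A : Set (S → S)) :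
    nuM e A = (Fintype.card (Fin l × (Fin l → Fin m)) : ℝ≥0∞)⁻¹
      * ((univ.filter fun t => Phi e t ∈ A).card : ℝ≥0∞) := by
  have hA : MeasurableSet A := (Set.to_countable A).measurableSet
  rw [nuM, Measure.smul_apply, Measure.finset_sum_apply, smul_eq_mul]
  congr 1
  have h1 : ∀ t : Fin l × (Fin l → Fin m),
      Measure.dirac (Phi e t) A = if Phi e t ∈ A then (1:ℝ≥0∞) else 0 := by
    intro t
    rw [Measure.dirac_apply' _ hA]
    by_cases h : Phi e t ∈ A <;> simp [h]
  rw [Finset.sum_congr rfl (fun t _ => h1 t), Finset.sum_boole]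

lemma nuM_apply' (e : S ≃ Fin l × Fin m) (A : Set (S → S))
    [DecidablePred fun t : Fin l × (Fin l → Fin m) => Phi e t ∈ A] :
    nuM e A = (Fintype.card (Fin l × (Fin l → Fin m)) : ℝ≥0∞)⁻¹
      * ((univ.filter fun t => Phi e t ∈ A).card : ℝ≥0∞) := by
  rw [nuM_apply, Finset.filter_congr_decidable]

/-- `kF` of any sequence of block-shift maps equals `l`. -/
lemma kF_of_range (e : S ≃ Fin l × Fin m) (hln : l ≤ Fintype.card S)
    (F : ℕ → S → S) (hF : ∀ s, F s ∈ Set.range (Phi e)) : kF F = l := by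
  have h1 : ∀ t, ∃ tt, fwd F (t + 1) = Phi e tt := by
    intro t
    induction t with
    | zero =>
      obtain ⟨t1, ht1⟩ := hF 1
      refine ⟨t1, ?_⟩
      funext x
      simp [fwd, ← ht1]
    | succ t ih =>
      obtain ⟨tt, htt⟩ := ih
      obtain ⟨a, ha⟩ := hF (t + 2)
      refine ⟨(tt.1 + a.1, a.2), ?_⟩
      have h : fwd F (t + 2) = F (t + 2) ∘ fwd F (t + 1) := rfl
      rw [h, htt, ← ha, Phi_comp]
  have h2 : ∀ t, ktF F (t + 1) = l := by
    intro t
    obtain ⟨tt, htt⟩ := h1 t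
    rw [ktF, htt, range_Phi_ncard]
  have h0 : ktF F 0 = Fintype.card S := by
    rw [ktF]
    show (Set.range (id : S → S)).ncard = _
    rw [Set.range_id, Set.ncard_univ, Nat.card_eq_fintype_card]
  rw [kF]
  apply le_antisymm
  · exact le_trans (ciInf_le (OrderBot.bddBelow _) 1) (le_of_eq (h2 0))
  · refine le_ciInf fun t => ?_
    cases t with
    | zero => rw [h0]; exact hln
    | succ t => rw [h2 t]

end Nu


-- STATEMENT 17
theorem stmt17 [Fintype S] [DecidableEq S]
    [MeasurableSpace S] [DiscreteMeasurableSpace S]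
    (n l : ℕ) (hcard : Fintype.card S = n) (hn : 2 ≤ n)
    (hl : 1 ≤ l) (hdvd : l ∣ n) :
    ∃ ν : Measure (S → S), IsProbabilityMeasure ν ∧
      Consistent (fun _ _ => (1 : ℝ) / n) ν ∧
      ∃ B : Fin l → Finset S,
        (∀ r, (B r).Nonempty) ∧
        (∀ r s, r ≠ s → Disjoint (B r) (B s)) ∧
        (∀ i : S, ∃ r, i ∈ B r) ∧
        (∀ f ∈ supp ν, ∃ π : Equiv.Perm (Fin l), ∀ r, ∀ i ∈ B r, f i ∈ B (π r)) ∧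
        ∃ μbar : Measure (ℕ → S → S), IsProbabilityMeasure μbar ∧ IsIID ν μbar ∧
          μbar {F | kF F = l} = 1 := by
  classical
  obtain ⟨m, hm⟩ := hdvd
  have hm0 : 0 < m := by
    rcases Nat.eq_zero_or_pos m with h0 | h0
    · rw [h0, mul_zero] at hm; omega
    · exact h0
  haveI : NeZero l := ⟨by omega⟩
  haveI : NeZero m := ⟨by omega⟩
  have hcard' : Fintype.card S = Fintype.card (Fin l × Fin m) := by
    simp [hcard, hm]
  let e : S ≃ Fin l × Fin m := Fintype.equivOfCardEq hcard'
  have hNval : Fintype.card (Fin l × (Fin l → Fin m)) = l * m ^ l := by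
    simp
  have hN0 : (Fintype.card (Fin l × (Fin l → Fin m)) : ℝ≥0∞) ≠ 0 :=
    Nat.cast_ne_zero.2 Fintype.card_ne_zero
  have hNtop : (Fintype.card (Fin l × (Fin l → Fin m)) : ℝ≥0∞) ≠ ⊤ :=
    ENNReal.natCast_ne_top _
  refine ⟨nuM e, ?_, ?_, ?_⟩
  · -- probability measure
    constructor
    rw [nuM_apply']
    have h : (Finset.univ.filter
        fun t : Fin l × (Fin l → Fin m) => Phi e t ∈ (Set.univ : Set (S → S)))
          = Finset.univ := by
      apply Finset.filter_true_of_mem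
      intro t _
      trivial
    rw [h, Finset.card_univ, ENNReal.inv_mul_cancel hN0 hNtop]
  · -- consistency
    intro i j
    rw [nuM_apply']
    have h : (Finset.univ.filter
        fun t : Fin l × (Fin l → Fin m) => Phi e t ∈ {f : S → S | f i = j})
          = Finset.univ.filter fun t => Phi e t i = j := by
      apply Finset.filter_congr
      intro t _
      simp [Set.mem_setOf_eq]
    rw [h, card_filter_eval]
    have hrhs : ENNReal.ofReal ((1 : ℝ) / (n : ℝ)) = ((n : ℕ) : ℝ≥0∞)⁻¹ := by
      rw [one_div, ← ENNReal.ofReal_natCast n, ← ENNReal.ofReal_inv_of_pos (by positivity)]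
    rw [hrhs]
    have key : m ^ (l - 1) * n = Fintype.card (Fin l × (Fin l → Fin m)) := by
      rw [hNval, hm]
      have hml : m ^ (l - 1) * m = m ^ l := by
        rw [← pow_succ]
        congr 1
        omega
      calc m ^ (l - 1) * (l * m) = l * (m ^ (l - 1) * m) := by ring
        _ = l * m ^ l := by rw [hml]
    have keyc : ((m ^ (l - 1) : ℕ) : ℝ≥0∞) * ((n : ℕ) : ℝ≥0∞)
        = (Fintype.card (Fin l × (Fin l → Fin m)) : ℝ≥0∞) := by
      rw [← Nat.cast_mul, key]
    have ha0 : ((m ^ (l - 1) : ℕ) : ℝ≥0∞) ≠ 0 := by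
      simp [pow_eq_zero_iff]
      omega
    have hatop : ((m ^ (l - 1) : ℕ) : ℝ≥0∞) ≠ ⊤ := ENNReal.natCast_ne_top _
    rw [← keyc, ENNReal.mul_inv (Or.inl ha0) (Or.inl hatop)]
    calc ((m ^ (l - 1) : ℕ) : ℝ≥0∞)⁻¹ * ((n : ℕ) : ℝ≥0∞)⁻¹ * ((m ^ (l - 1) : ℕ) : ℝ≥0∞)
        = ((n : ℕ) : ℝ≥0∞)⁻¹ * (((m ^ (l - 1) : ℕ) : ℝ≥0∞)⁻¹ * ((m ^ (l - 1) : ℕ) : ℝ≥0∞)) := by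
          ring
      _ = ((n : ℕ) : ℝ≥0∞)⁻¹ := by
          rw [ENNReal.inv_mul_cancel ha0 hatop, mul_one]
  · -- block structure and iid sequence
    refine ⟨fun r => Finset.univ.filter fun i => (e i).1 = r, ?_, ?_, ?_, ?_, ?_⟩
    · intro r
      exact ⟨e.symm (r, ⟨0, hm0⟩), by simp⟩
    · intro r s hrs
      rw [Finset.disjoint_left]
      intro i hi hj
      simp only [Finset.mem_filter, Finset.mem_univ, true_and] at hi hj
      exact hrs (hi ▸ hj ▸ rfl)
    · intro i
      exact ⟨(e i).1, by simp⟩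
    · -- supp condition
      intro f hf
      have hpos : 0 < nuM e {f} := hf
      rw [nuM_apply'] at hpos
      obtain ⟨t, ht⟩ : ∃ t, Phi e t ∈ ({f} : Set (S → S)) := by
        by_contra hno
        push_neg at hno
        rw [Finset.filter_false_of_mem (fun t _ => hno t)] at hpos
        simp at hpos
      rw [Set.mem_singleton_iff] at ht
      refine ⟨Equiv.addRight t.1, ?_⟩
      intro r i hi
      simp only [Finset.mem_filter, Finset.mem_univ, true_and] at hi ⊢
      rw [← ht, Phi_fst, hi, Equiv.coe_addRight]
    · -- the iid sequence
      have hln : l ≤ Fintype.card S := by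
        rw [hcard]
        exact Nat.le_of_dvd (by omega) ⟨m, hm⟩
      obtain ⟨μbar, hprob, hcyl, hfull⟩ :=
        exists_iid (Fin l × (Fin l → Fin m)) (X := S → S) (Phi e) (Phi_inj e)
      refine ⟨μbar, hprob, ?_, ?_⟩
      · intro I g
        rw [hcyl I g]
        apply Finset.prod_congr rfl
        intro s _
        rw [nuM_apply']
        congr 2
      · exact hfull _ (fun F hF => kF_of_range e hln F hF)

end CFTP
end

section
/- Let S be a finite set with |S| = n ≥ 2 and let P_n be the stochastic matrix on S with all entries equal to 1/n. If μ is a probability measure consistent with P_n that is an 𝒮-block measure for a partition 𝒮 = {S_1, …, S_l} of S, then all blocks have equal size |S_r| = n/l; in particular l divides n. -/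
open MeasureTheory

namespace CFTP

variable {S : Type*}

-- STATEMENT 18
theorem stmt18 [Fintype S] [DecidableEq S]
    [MeasurableSpace S] [DiscreteMeasurableSpace S]
    (n l : ℕ) (hcard : Fintype.card S = n) (hn : 2 ≤ n)
    (ν : Measure (S → S)) [IsProbabilityMeasure ν]
    (hcons : Consistent (fun _ _ => (1 : ℝ) / n) ν)
    (B : Fin l → Finset S)
    (hne : ∀ r, (B r).Nonempty)
    (hdisj : ∀ r s, r ≠ s → Disjoint (B r) (B s))
    (hcover : ∀ i : S, ∃ r, i ∈ B r)
    (hblock : ∀ f ∈ supp ν, ∃ π : Equiv.Perm (Fin l), ∀ r, ∀ i ∈ B r, f i ∈ B (π r))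
    (μbar : Measure (ℕ → S → S)) [IsProbabilityMeasure μbar] (hiid : IsIID ν μbar)
    (hk : μbar {F | kF F = l} = 1) :
    (∀ r, (B r).card * l = n) ∧ l ∣ n := by
  classical
  have hmeas : ∀ s : Set (S → S), MeasurableSet s := fun s => s.toFinite.measurableSet
  have hnpos : (0:ℝ) < n := by exact_mod_cast (by omega : 0 < n)
  -- complement of support is null
  have hsuppc : ν (supp ν)ᶜ = 0 := by
    have hset : (supp ν)ᶜ = ⋃ f ∈ {f : S → S | ν {f} = 0}, {f} := by
      ext g
      simp [supp, pos_iff_ne_zero, not_not]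
    rw [hset, measure_biUnion_null_iff (Set.to_countable _)]
    exact fun f hf => hf
  have hsupp1 : ν (supp ν) = 1 := by
    have := measure_add_measure_compl (μ := ν) (hmeas (supp ν))
    rw [hsuppc, add_zero] at this
    rw [this, measure_univ]
  -- measure of {f | f i ∈ B s}
  have key : ∀ (i : S) (s : Fin l),
      ν {f : S → S | f i ∈ B s} = (B s).card * ENNReal.ofReal (1 / n) := by
    intro i s
    have hset : {f : S → S | f i ∈ B s} = ⋃ j ∈ (B s : Finset S), {f : S → S | f i = j} := by
      ext f; simp
    rw [hset, measure_biUnion_finset]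
    · simp only [hcons i]
      rw [Finset.sum_const, nsmul_eq_mul]
    · intro j hj j' hj' hjj'
      refine Set.disjoint_left.2 fun f hf hf' => hjj' ?_
      exact hf.symm.trans hf'
    · exact fun _ _ => hmeas _
  -- choose representatives
  have main : ∀ s : Fin l, (B s).card * l = n := by
    intro s
    set ir : Fin l → S := fun r => (hne r).choose with hir
    have hirmem : ∀ r, ir r ∈ B r := fun r => (hne r).choose_spec
    set E : Fin l → Set (S → S) := fun r => {f : S → S | f (ir r) ∈ B s} ∩ supp ν with hE
    -- membership in a unique block
    have hblockeq : ∀ (j : S) (a b : Fin l), j ∈ B a → j ∈ B b → a = b := by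
      intro j a b ha hb
      by_contra hab
      exact (Finset.disjoint_left.1 (hdisj a b hab)) ha hb
    have hdisjE : Pairwise (Function.onFun Disjoint E) := by
      intro r r' hrr'
      refine Set.disjoint_left.2 fun f hf hf' => hrr' ?_
      obtain ⟨π, hπ⟩ := hblock f hf.2
      have h1 : π r = s := hblockeq _ _ _ (hπ r (ir r) (hirmem r)) hf.1
      have h2 : π r' = s := hblockeq _ _ _ (hπ r' (ir r') (hirmem r')) hf'.1
      exact π.injective (h1.trans h2.symm)
    have hcoverE : (⋃ r, E r) = supp ν := by
      apply Set.Subset.antisymm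
      · exact Set.iUnion_subset fun r => Set.inter_subset_right
      · intro f hf
        obtain ⟨π, hπ⟩ := hblock f hf
        refine Set.mem_iUnion.2 ⟨π.symm s, ?_, hf⟩
        have := hπ (π.symm s) (ir (π.symm s)) (hirmem _)
        rwa [Equiv.apply_symm_apply] at this
    have hsum : ∑ r : Fin l, ν (E r) = 1 := by
      rw [← tsum_fintype (L := SummationFilter.unconditional _), ← measure_iUnion hdisjE (fun _ => hmeas _), hcoverE, hsupp1]
    have hEr : ∀ r, ν (E r) = (B s).card * ENNReal.ofReal (1 / n) := by
      intro r
      rw [hE]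
      simp only
      rw [measure_inter_conull hsuppc, key]
    rw [Finset.sum_congr rfl (fun r _ => hEr r), Finset.sum_const, nsmul_eq_mul] at hsum
    simp only [Finset.card_univ, Fintype.card_fin] at hsum
    have hofReal : ENNReal.ofReal (1 / (n:ℝ)) = ((n:ENNReal))⁻¹ := by
      rw [one_div, ENNReal.ofReal_inv_of_pos hnpos, ENNReal.ofReal_natCast]
    rw [hofReal] at hsum
    have hnne : ((n:ENNReal)) ≠ 0 := by
      simp only [ne_eq, Nat.cast_eq_zero]; omega
    have hntop : ((n:ENNReal)) ≠ ⊤ := ENNReal.natCast_ne_top n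
    rw [← mul_assoc, ← div_eq_mul_inv, ENNReal.div_eq_one_iff hnne hntop] at hsum
    have hcast : (((l * (B s).card : ℕ)) : ENNReal) = ((n:ℕ) : ENNReal) := by
      push_cast
      exact hsum
    have hfin : l * (B s).card = n := Nat.cast_injective (R := ENNReal) hcast
    rw [mul_comm] at hfin
    exact hfin
  refine ⟨main, ?_⟩
  -- l divides n
  obtain ⟨i⟩ := Fintype.card_pos_iff.1 (by omega : 0 < Fintype.card S)
  obtain ⟨r, _⟩ := hcover i
  exact ⟨(B r).card, by rw [← main r]; ring⟩

end CFTP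
end

section
/- Let S be a finite set with |S| = n ≥ 3 and let P_n be the stochastic matrix on S with all entries equal to 1/n. Then n − 1 ∉ K(P_n); that is, there is no probability measure μ consistent with P_n whose coalescence number satisfies k(μ) = n − 1. -/
open MeasureTheory

namespace CFTP

variable {S : Type*}

section Aux19

lemma fwd_congr' {F G : ℕ → S → S} (t : ℕ) (h : ∀ s, 1 ≤ s → s ≤ t → F s = G s) :
    fwd F t = fwd G t := by
  induction t with
  | zero => rfl
  | succ t ih =>
    have h1 : F (t + 1) = G (t + 1) := h _ (Nat.le_add_left _ _) le_rfl
    have h2 : fwd F t = fwd G t := ih fun s hs hst => h s hs (hst.trans (Nat.le_succ t))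
    simp [fwd, h1, h2]

lemma fwd_injective' {F : ℕ → S → S} (t : ℕ)
    (h : ∀ s, 1 ≤ s → s ≤ t → Function.Injective (F s)) :
    Function.Injective (fwd F t) := by
  induction t with
  | zero => exact fun a b hab => hab
  | succ t ih =>
    exact Function.Injective.comp (h _ (Nat.le_add_left _ _) le_rfl)
      (ih fun s hs hst => h s hs (hst.trans (Nat.le_succ t)))

lemma measurable_fwd' [Fintype S] [MeasurableSpace S] [DiscreteMeasurableSpace S] (t : ℕ) :
    Measurable (fun F : ℕ → S → S => fwd F t) := by
  induction t with
  | zero => exact measurable_const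
  | succ t ih =>
    have heq : (fun F : ℕ → S → S => fwd F (t + 1)) =
        (fun p : (S → S) × (S → S) => p.1 ∘ p.2) ∘ (fun F => (F (t + 1), fwd F t)) := rfl
    rw [heq]
    exact (measurable_of_countable _).comp ((measurable_pi_apply _).prodMk ih)

lemma kF_eq_iff' (F : ℕ → S → S) (m : ℕ) :
    kF F = m ↔ (∃ t, ktF F t = m) ∧ ∀ t, m ≤ ktF F t := by
  constructor
  · intro h
    have hmem : kF F ∈ Set.range (ktF F) := Nat.sInf_mem (Set.range_nonempty (ktF F))
    obtain ⟨t, ht⟩ := hmem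
    refine ⟨⟨t, by rw [ht, h]⟩, fun t => ?_⟩
    rw [← h]
    exact Nat.sInf_le ⟨t, rfl⟩
  · rintro ⟨⟨t, ht⟩, hall⟩
    refine le_antisymm ?_ ?_
    · rw [← ht]
      exact Nat.sInf_le ⟨t, rfl⟩
    · exact le_csInf (Set.range_nonempty _) (by rintro b ⟨u, rfl⟩; exact hall u)

lemma measurableSet_kF_eq' [Fintype S] [MeasurableSpace S] [DiscreteMeasurableSpace S] (m : ℕ) :
    MeasurableSet {F : ℕ → S → S | kF F = m} := by
  have hk : ∀ t, Measurable (fun F : ℕ → S → S => ktF F t) := fun t =>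
    (measurable_of_countable (fun g : S → S => (Set.range g).ncard)).comp (measurable_fwd' t)
  have heq : {F : ℕ → S → S | kF F = m} =
      (⋃ t, (fun F : ℕ → S → S => ktF F t) ⁻¹' {m}) ∩
        ⋂ t, (fun F : ℕ → S → S => ktF F t) ⁻¹' Set.Ici m := by
    ext F
    simp only [Set.mem_setOf_eq, kF_eq_iff', Set.mem_inter_iff, Set.mem_iUnion,
      Set.mem_iInter, Set.mem_preimage, Set.mem_singleton_iff, Set.mem_Ici]
  rw [heq]
  exact (MeasurableSet.iUnion fun t => (hk t) (measurableSet_singleton m)).inter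
    (MeasurableSet.iInter fun t => (hk t) measurableSet_Ici)

lemma range_eq_univ_of_inj' [Fintype S] {f : S → S} (h : Function.Injective f) :
    Set.range f = Set.univ :=
  (Finite.injective_iff_surjective.mp h).range_eq

lemma ncard_image_collision {g : S → S} {s : Set S} {a b : S} [Fintype S] (ha : a ∈ s)
    (hb : b ∈ s) (hab : a ≠ b) (hg : g a = g b) : (g '' s).ncard ≤ s.ncard - 1 := by
  have himg : g '' s = g '' (s \ {a}) := by
    apply Set.Subset.antisymm
    · rintro _ ⟨x, hx, rfl⟩
      by_cases hxa : x = a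
      · exact ⟨b, ⟨hb, by simp [Ne.symm hab]⟩, by rw [hxa, hg]⟩
      · exact ⟨x, ⟨hx, hxa⟩, rfl⟩
    · exact Set.image_mono Set.diff_subset
  rw [himg]
  calc (g '' (s \ {a})).ncard ≤ (s \ {a}).ncard := Set.ncard_image_le (Set.toFinite _)
    _ = s.ncard - 1 := Set.ncard_diff_singleton_of_mem ha

lemma ncard_compl_singleton [Fintype S] (m : S) :
    ({m}ᶜ : Set S).ncard = Fintype.card S - 1 := by
  rw [Set.compl_eq_univ_diff, Set.ncard_diff_singleton_of_mem (Set.mem_univ m),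
    Set.ncard_univ, Nat.card_eq_fintype_card]

lemma range_eq_compl_singleton' [Fintype S] {f : S → S} (h1 : ¬ Function.Injective f)
    (h2 : Fintype.card S - 1 ≤ (Set.range f).ncard) :
    ∃ m, Set.range f = {m}ᶜ := by
  have hnsurj : ¬ Function.Surjective f := fun hs => h1 (Finite.injective_iff_surjective.mpr hs)
  obtain ⟨m, hm⟩ := not_forall.mp hnsurj
  push_neg at hm
  have hsub : Set.range f ⊆ {m}ᶜ := by
    rintro _ ⟨x, rfl⟩
    simpa using fun hx => hm x hx
  refine ⟨m, Set.eq_of_subset_of_ncard_le hsub ?_ (Set.toFinite _)⟩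
  rw [ncard_compl_singleton]
  exact h2

end Aux19

-- STATEMENT 19
theorem stmt19 [Fintype S] [DecidableEq S]
    [MeasurableSpace S] [DiscreteMeasurableSpace S]
    (n : ℕ) (hcard : Fintype.card S = n) (hn : 3 ≤ n) :
    ¬ ∃ ν : Measure (S → S), IsProbabilityMeasure ν ∧
        Consistent (fun _ _ => (1 : ℝ) / n) ν ∧
        ∃ μbar : Measure (ℕ → S → S), IsProbabilityMeasure μbar ∧ IsIID ν μbar ∧
          μbar {F | kF F = n - 1} = 1 := by
  rintro ⟨ν, hνp, hcons, μbar, hμp, hiid, hone⟩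
  haveI := hνp
  haveI := hμp
  -- measure of a finset is the sum of its singletons
  have hfin : ∀ A : Set (S → S), MeasurableSet A := fun A => A.toFinite.measurableSet
  have hsum : ∀ s : Finset (S → S), ν ↑s = ∑ f ∈ s, ν {f} := by
    intro s
    have : (↑s : Set (S → S)) = ⋃ f ∈ s, {f} := by
      ext x; simp
    rw [this, measure_biUnion_finset ?_ fun f _ => hfin {f}]
    intro x _ y _ hxy
    simp only [Function.onFun]
    exact Set.disjoint_singleton.mpr hxy
  have hsum_univ : ∑ f : S → S, ν {f} = 1 := by
    have := hsum Finset.univ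
    rw [Finset.coe_univ, measure_univ] at this
    exact this.symm
  -- existence of typical sequences extending a given finite word from the support
  have key : ∀ (t : ℕ) (g : ℕ → S → S), (∀ s, 1 ≤ s → s ≤ t → 0 < ν {g s}) →
      ∃ F : ℕ → S → S, kF F = n - 1 ∧ (∀ s, 1 ≤ s → s ≤ t → F s = g s) ∧
        ∀ s, 0 < ν {F s} := by
    intro t g hg
    set C := {F : ℕ → S → S | ∀ s ∈ Finset.Icc 1 t, F s = g s} with hCdef
    have hC : 0 < μbar C := by
      rw [hCdef, hiid (Finset.Icc 1 t) g]
      rw [CanonicallyOrderedAdd.prod_pos]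
      intro s hs
      exact hg s (Finset.mem_Icc.mp hs).1 (Finset.mem_Icc.mp hs).2
    have hA : μbar {F : ℕ → S → S | kF F = n - 1}ᶜ = 0 := by
      rw [prob_compl_eq_zero_iff (measurableSet_kF_eq' (n - 1))]
      exact hone
    have hB : μbar {F : ℕ → S → S | ∀ s, 0 < ν {F s}}ᶜ = 0 := by
      have hsub : {F : ℕ → S → S | ∀ s, 0 < ν {F s}}ᶜ ⊆
          ⋃ s : ℕ, ⋃ h ∈ {h : S → S | ν {h} = 0}, {F : ℕ → S → S | F s = h} := by
        intro F hF
        simp only [Set.mem_compl_iff, Set.mem_setOf_eq, not_forall] at hF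
        obtain ⟨s, hs⟩ := hF
        have : ν {F s} = 0 := by
          by_contra h0
          exact hs (pos_iff_ne_zero.mpr h0)
        exact Set.mem_iUnion.mpr ⟨s, Set.mem_iUnion₂.mpr ⟨F s, this, rfl⟩⟩
      refine measure_mono_null hsub (measure_iUnion_null fun s => ?_)
      rw [measure_biUnion_null_iff (Set.to_countable _)]
      intro h hh
      have := hiid {s} (fun _ => h)
      simp only [Finset.mem_singleton, Finset.prod_singleton] at this
      have heq : {F : ℕ → S → S | ∀ s' , s' = s → F s' = (fun _ => h) s'} =
          {F : ℕ → S → S | F s = h} := by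
        ext F
        constructor
        · intro hF; exact hF s rfl
        · intro hF s' hs'; rw [hs']; exact hF
      rw [heq] at this
      rw [this]
      exact hh
    have hne : (C ∩ ({F : ℕ → S → S | kF F = n - 1} ∩
        {F : ℕ → S → S | ∀ s, 0 < ν {F s}})).Nonempty := by
      by_contra hemp
      rw [Set.not_nonempty_iff_eq_empty] at hemp
      have hsub : C ⊆ {F : ℕ → S → S | kF F = n - 1}ᶜ ∪
          {F : ℕ → S → S | ∀ s, 0 < ν {F s}}ᶜ := by
        intro F hF
        by_contra hc
        simp only [Set.mem_union, Set.mem_compl_iff, not_or, not_not] at hc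
        have : F ∈ (∅ : Set (ℕ → S → S)) := hemp ▸ ⟨hF, hc.1, hc.2⟩
        exact this
      have hle : μbar C ≤ μbar {F : ℕ → S → S | kF F = n - 1}ᶜ +
          μbar {F : ℕ → S → S | ∀ s, 0 < ν {F s}}ᶜ :=
        (measure_mono hsub).trans (measure_union_le _ _)
      rw [hA, hB, add_zero] at hle
      exact absurd (le_antisymm hle zero_le) hC.ne'
    obtain ⟨F, hFC, hFk, hFs⟩ := hne
    exact ⟨F, hFk, fun s h1 h2 => hFC s (Finset.mem_Icc.mpr ⟨h1, h2⟩), hFs⟩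
  -- words from the support have large image
  have core : ∀ (t : ℕ) (g : ℕ → S → S), (∀ s, 1 ≤ s → s ≤ t → 0 < ν {g s}) →
      n - 1 ≤ (Set.range (fwd g t)).ncard := by
    intro t g hg
    obtain ⟨F, hk, hpre, -⟩ := key t g hg
    have := ((kF_eq_iff' F (n - 1)).mp hk).2 t
    rwa [ktF, fwd_congr' t hpre] at this
  have himgsupp : ∀ f : S → S, 0 < ν {f} → n - 1 ≤ (Set.range f).ncard := by
    intro f hf
    have := core 1 (fun _ => f) (fun s _ _ => hf)
    simpa [fwd] using this
  have hmiss : ∀ f : S → S, 0 < ν {f} → ¬ Function.Injective f →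
      ∃ m, Set.range f = {m}ᶜ := by
    intro f hf hninj
    exact range_eq_compl_singleton' hninj (hcard ▸ himgsupp f hf)
  -- W1 : collisions of any g in the support must contain the missing point of any
  -- non-injective f in the support
  have W1 : ∀ f : S → S, 0 < ν {f} → ∀ m : S, Set.range f = {m}ᶜ →
      ∀ g : S → S, 0 < ν {g} → ∀ a b, a ≠ b → g a = g b → a = m ∨ b = m := by
    intro f hf m hm g hg a b hab hgab
    by_contra hc
    push_neg at hc
    obtain ⟨ham, hbm⟩ := hc
    have h2 := core 2 (fun s => if s = 1 then f else g)
      (by intro s h1 h2; interval_cases s <;> simp [hf, hg])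
    have hfwd : fwd (fun s : ℕ => if s = 1 then f else g) 2 = g ∘ f := by
      simp [fwd, Function.comp]
    rw [hfwd, Set.range_comp, hm] at h2
    have hb1 : (g '' ({m}ᶜ : Set S)).ncard ≤ ({m}ᶜ : Set S).ncard - 1 :=
      ncard_image_collision (by simpa using ham) (by simpa using hbm) hab hgab
    rw [ncard_compl_singleton, hcard] at hb1
    omega
  have W2 : ∀ f : S → S, 0 < ν {f} → ∀ m : S, Set.range f = {m}ᶜ →
      ∀ h : S → S, 0 < ν {h} → Function.Injective h →
      ∀ g : S → S, 0 < ν {g} → ∀ a b, a ≠ b → g a = g b → a = h m ∨ b = h m := by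
    intro f hf m hm h hh hinj g hg a b hab hgab
    by_contra hc
    push_neg at hc
    obtain ⟨ham, hbm⟩ := hc
    have h3 := core 3 (fun s => if s = 1 then f else if s = 2 then h else g)
      (by intro s h1 h2; interval_cases s <;> simp [hf, hg, hh])
    have hfwd : fwd (fun s : ℕ => if s = 1 then f else if s = 2 then h else g) 3 =
        g ∘ (h ∘ f) := by
      simp [fwd, Function.comp]
    rw [hfwd, Set.range_comp, Set.range_comp, hm] at h3
    have hbij : Function.Bijective h := ⟨hinj, Finite.injective_iff_surjective.mp hinj⟩
    have himg : h '' ({m}ᶜ : Set S) = {h m}ᶜ := by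
      rw [Set.image_compl_eq hbij, Set.image_singleton]
    rw [himg] at h3
    have hb1 : (g '' ({h m}ᶜ : Set S)).ncard ≤ ({h m}ᶜ : Set S).ncard - 1 :=
      ncard_image_collision (by simpa using ham) (by simpa using hbm) hab hgab
    rw [ncard_compl_singleton, hcard] at hb1
    omega
  -- the counting identity from consistency with the uniform matrix
  have CNT : ∀ j : S, ∑ f : S → S,
      ((Finset.univ.filter fun i => f i = j).card : ENNReal) * ν {f} = 1 := by
    intro j
    have hnR : (0 : ℝ) < (n : ℝ) := by positivity
    have h1 : ∀ i : S, ν {f : S → S | f i = j} = ((n : ENNReal))⁻¹ := by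
      intro i
      rw [hcons i j, ENNReal.ofReal_div_of_pos hnR, ENNReal.ofReal_one,
        ENNReal.ofReal_natCast, one_div]
    have h2 : ∑ i : S, ν {f : S → S | f i = j} = 1 := by
      rw [Finset.sum_congr rfl fun i _ => h1 i, Finset.sum_const, Finset.card_univ, hcard,
        nsmul_eq_mul]
      exact ENNReal.mul_inv_cancel (by exact_mod_cast (by omega : n ≠ 0))
        (ENNReal.natCast_ne_top n)
    have h3 : ∀ i : S, ν {f : S → S | f i = j} =
        ∑ f : S → S, if f i = j then ν {f} else 0 := by
      intro i
      have hset : {f : S → S | f i = j} =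
          ↑(Finset.univ.filter fun f : S → S => f i = j) := by
        ext f; simp
      rw [hset, hsum, Finset.sum_filter]
    rw [Finset.sum_congr rfl fun i _ => h3 i, Finset.sum_comm] at h2
    rw [← h2]
    refine Finset.sum_congr rfl fun f _ => ?_
    rw [← Finset.sum_filter, Finset.sum_const, nsmul_eq_mul]
  -- obtain a non-injective element of the support
  obtain ⟨F0, hk0, -, hs0⟩ := key 0 (fun _ => id) (by intro s h1 h2; omega)
  obtain ⟨⟨t0, ht0⟩, -⟩ := (kF_eq_iff' F0 (n - 1)).mp hk0
  have hnoninj0 : ¬ Function.Injective (fwd F0 t0) := by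
    intro hinj
    have hn' : (Set.range (fwd F0 t0)).ncard = n := by
      rw [range_eq_univ_of_inj' hinj, Set.ncard_univ, Nat.card_eq_fintype_card, hcard]
    rw [ktF] at ht0
    omega
  have hex : ∃ s, 1 ≤ s ∧ s ≤ t0 ∧ ¬ Function.Injective (F0 s) := by
    by_contra hcc
    push_neg at hcc
    exact hnoninj0 (fwd_injective' t0 fun s h1 h2 => hcc s h1 h2)
  obtain ⟨s0, -, -, hf0ninj⟩ := hex
  set f0 := F0 s0 with hf0def
  have hf0 : 0 < ν {f0} := hs0 s0
  obtain ⟨m0, hm0⟩ := hmiss f0 hf0 hf0ninj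
  by_cases hcase : ∀ g : S → S, 0 < ν {g} → ¬ Function.Injective g → m0 ∉ Set.range g
  · -- CASE 1 : every non-injective map in the support misses m0
    have h1 := CNT m0
    have hpt : ∀ f : S → S,
        ((Finset.univ.filter fun i => f i = m0).card : ENNReal) * ν {f} ≤
          (if f = f0 then 0 else 1) * ν {f} := by
      intro f
      by_cases h0z : ν {f} = 0
      · simp [h0z]
      have hfs : 0 < ν {f} := pos_iff_ne_zero.mpr h0z
      by_cases hff : f = f0
      · have hm0nr : m0 ∉ Set.range f := by rw [hff, hm0]; simp
        have hempty : (Finset.univ.filter fun i => f i = m0) = ∅ := by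
          rw [Finset.filter_eq_empty_iff]
          intro i _
          exact fun hi => hm0nr ⟨i, hi⟩
        simp [hempty]
      · rw [if_neg hff]
        refine mul_le_mul_left ?_ _
        by_cases hinj : Function.Injective f
        · have hc1 : (Finset.univ.filter fun i => f i = m0).card ≤ 1 := by
            rw [Finset.card_le_one]
            intro a ha b hb
            simp only [Finset.mem_filter] at ha hb
            exact hinj (ha.2.trans hb.2.symm)
          exact_mod_cast hc1
        · have hm0nr : m0 ∉ Set.range f := hcase f hfs hinj
          have hempty : (Finset.univ.filter fun i => f i = m0) = ∅ := by
            rw [Finset.filter_eq_empty_iff]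
            intro i _
            exact fun hi => hm0nr ⟨i, hi⟩
          simp [hempty]
    have hsb : (1 : ENNReal) ≤ ∑ f : S → S, (if f = f0 then 0 else 1) * ν {f} :=
      le_trans (le_of_eq h1.symm) (Finset.sum_le_sum fun f _ => hpt f)
    have hsplit : ∑ f : S → S, (if f = f0 then (0 : ENNReal) else 1) * ν {f} =
        ∑ f ∈ Finset.univ.erase f0, ν {f} := by
      rw [← Finset.sum_erase_add _ _ (Finset.mem_univ f0)]
      have hz : (if f0 = f0 then (0 : ENNReal) else 1) * ν {f0} = 0 := by simp
      rw [hz, add_zero]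
      refine Finset.sum_congr rfl fun f hf => ?_
      rw [if_neg (Finset.ne_of_mem_erase hf), one_mul]
    have htot : ν {f0} + ∑ f ∈ Finset.univ.erase f0, ν {f} = 1 :=
      (Finset.add_sum_erase Finset.univ (fun f => ν {f}) (Finset.mem_univ f0)).trans hsum_univ
    rw [hsplit] at hsb
    have hle2 : ν {f0} + 1 ≤ ν {f0} + ∑ f ∈ Finset.univ.erase f0, ν {f} :=
      add_le_add_right hsb _
    rw [htot] at hle2
    have hle3 : ν {f0} + 1 ≤ 0 + 1 := by rwa [zero_add]
    have := (ENNReal.add_le_add_iff_right ENNReal.one_ne_top).mp hle3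
    exact absurd (le_antisymm this zero_le) hf0.ne'
  · -- CASE 2 : some non-injective g1 in the support has m0 in its range
    push_neg at hcase
    obtain ⟨g1, hg1, hg1ninj, hm0g1⟩ := hcase
    obtain ⟨m1, hm1⟩ := hmiss g1 hg1 hg1ninj
    have hm01 : m1 ≠ m0 := by
      intro h
      rw [hm1, h] at hm0g1
      simp at hm0g1
    obtain ⟨a1, b1, hgab, hab⟩ := Function.not_injective_iff.mp hg1ninj
    have hp0 := W1 f0 hf0 m0 hm0 g1 hg1 a1 b1 hab hgab
    have hp1 := W1 g1 hg1 m1 hm1 g1 hg1 a1 b1 hab hgab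
    have hg1col : g1 m0 = g1 m1 := by
      rcases hp0 with h0 | h0 <;> rcases hp1 with h1 | h1
      · exact absurd (h1.symm.trans h0) hm01
      · rw [← h0, ← h1]; exact hgab
      · rw [← h0, ← h1]; exact hgab.symm
      · exact absurd (h1.symm.trans h0) hm01
    have hj0ex : ∃ j0 : S, j0 ≠ m0 ∧ j0 ≠ m1 := by
      have hpos2 : 0 < (Finset.univ \ ({m0, m1} : Finset S)).card := by
        have hc2 : ({m0, m1} : Finset S).card ≤ 2 :=
          (Finset.card_insert_le _ _).trans (by simp)
        rw [Finset.card_sdiff_of_subset (Finset.subset_univ _), Finset.card_univ, hcard]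
        omega
      obtain ⟨j0, hj0⟩ := Finset.card_pos.mp hpos2
      simp only [Finset.mem_sdiff, Finset.mem_univ, true_and, Finset.mem_insert,
        Finset.mem_singleton, not_or] at hj0
      exact ⟨j0, hj0.1, hj0.2⟩
    obtain ⟨j0, hj0m0, hj0m1⟩ := hj0ex
    have hpos : 0 < ν {f : S → S | f m0 = j0} := by
      rw [hcons m0 j0]
      refine ENNReal.ofReal_pos.mpr (by positivity)
    obtain ⟨h0, hh0m, hh0⟩ : ∃ h0 : S → S, h0 m0 = j0 ∧ 0 < ν {h0} := by
      by_contra hcc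
      push_neg at hcc
      have hz : ν {f : S → S | f m0 = j0} = 0 := by
        have hset : {f : S → S | f m0 = j0} =
            ↑(Finset.univ.filter fun f : S → S => f m0 = j0) := by
          ext f; simp
        rw [hset, hsum]
        refine Finset.sum_eq_zero fun f hf => ?_
        have hfm : f m0 = j0 := (Finset.mem_filter.mp hf).2
        by_contra hnz
        exact hnz (le_antisymm (hcc f hfm) zero_le)
      rw [hz] at hpos
      exact lt_irrefl _ hpos
    have hh0ninj : ¬ Function.Injective h0 := by
      intro hinj
      rcases W2 f0 hf0 m0 hm0 h0 hh0 hinj g1 hg1 m0 m1 (Ne.symm hm01) hg1col with h | h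
      · exact hj0m0 (h.trans hh0m).symm
      · exact hj0m1 (h.trans hh0m).symm
    obtain ⟨a2, b2, hg2ab, hab2⟩ := Function.not_injective_iff.mp hh0ninj
    have hq0 := W1 f0 hf0 m0 hm0 h0 hh0 a2 b2 hab2 hg2ab
    have hq1 := W1 g1 hg1 m1 hm1 h0 hh0 a2 b2 hab2 hg2ab
    have hh0col : h0 m0 = h0 m1 := by
      rcases hq0 with h0' | h0' <;> rcases hq1 with h1' | h1'
      · exact absurd (h1'.symm.trans h0') hm01
      · rw [← h0', ← h1']; exact hg2ab
      · rw [← h0', ← h1']; exact hg2ab.symm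
      · exact absurd (h1'.symm.trans h0') hm01
    have hh0m1 : h0 m1 = j0 := by rw [← hh0col, hh0m]
    have h1 := CNT j0
    have hpt : ∀ f : S → S,
        (((1 + if f = h0 then 1 else 0 : ℕ) : ENNReal)) * ν {f} ≤
          ((Finset.univ.filter fun i => f i = j0).card : ENNReal) * ν {f} := by
      intro f
      by_cases h0z : ν {f} = 0
      · simp [h0z]
      have hfs : 0 < ν {f} := pos_iff_ne_zero.mpr h0z
      refine mul_le_mul_left ?_ _
      rw [Nat.cast_le]
      by_cases hff : f = h0
      · subst hff
        have hif : (if f = f then 1 else 0 : ℕ) = 1 := if_pos rfl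
        rw [hif]
        have hsub2 : ({m0, m1} : Finset S) ⊆ Finset.univ.filter fun i => f i = j0 := by
          intro x hx
          simp only [Finset.mem_insert, Finset.mem_singleton] at hx
          rcases hx with rfl | rfl
          · simp [hh0m]
          · simp [hh0m1]
        have hcle := Finset.card_le_card hsub2
        rw [Finset.card_pair (Ne.symm hm01)] at hcle
        omega
      · simp only [if_neg hff]
        have hexi : ∃ i, f i = j0 := by
          by_cases hinj : Function.Injective f
          · exact Finite.injective_iff_surjective.mp hinj j0
          · obtain ⟨m, hm⟩ := hmiss f hfs hinj
            have hmem : m = m0 ∨ m = m1 := by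
              rcases W1 f hfs m hm g1 hg1 m0 m1 (Ne.symm hm01) hg1col with h | h
              · exact Or.inl h.symm
              · exact Or.inr h.symm
            have hj0r : j0 ∈ Set.range f := by
              rw [hm]
              simp only [Set.mem_compl_iff, Set.mem_singleton_iff]
              rcases hmem with rfl | rfl
              · exact hj0m0
              · exact hj0m1
            exact hj0r
        obtain ⟨i, hi⟩ := hexi
        have hmemf : i ∈ Finset.univ.filter fun i => f i = j0 := by simp [hi]
        have := Finset.card_pos.mpr ⟨i, hmemf⟩
        omega
    have hsb : ∑ f : S → S, (((1 + if f = h0 then 1 else 0 : ℕ) : ENNReal)) * ν {f} ≤ 1 :=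
      (Finset.sum_le_sum fun f _ => hpt f).trans_eq h1
    have hlhs : ∑ f : S → S, (((1 + if f = h0 then 1 else 0 : ℕ) : ENNReal)) * ν {f} =
        1 + ν {h0} := by
      have hterm : ∀ f : S → S, (((1 + if f = h0 then 1 else 0 : ℕ) : ENNReal)) * ν {f} =
          ν {f} + (if f = h0 then ν {f} else 0) := by
        intro f
        by_cases hff : f = h0
        · simp [hff, two_mul]
        · simp [hff]
      rw [Finset.sum_congr rfl fun f _ => hterm f, Finset.sum_add_distrib, hsum_univ,
        Finset.sum_ite_eq' Finset.univ h0 fun f => ν {f}]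
      simp
    rw [hlhs] at hsb
    have hle3 : ν {h0} + 1 ≤ 0 + 1 := by
      rw [zero_add]
      rwa [add_comm] at hsb
    have := (ENNReal.add_le_add_iff_right ENNReal.one_ne_top).mp hle3
    exact absurd (le_antisymm this zero_le) hh0.ne'

end CFTP
end
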